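/- Let x, y ∈ D_loc(S), t ≥ 0 and K ⊂ S compact. If ρ̃_{t,K}(x,y) ≤ 1/9, then ρ_{t,K}(x,y) ≤ 6 · ( √(ρ̃_{t,K}(x,y)) ∨ ω'_{t,K,x}(√(ρ̃_{t,K}(x,y))) ). -/

import Mathlib

open Filter Topology Set MeasureTheory
open scoped ENNReal NNReal

noncomputable section

namespace LocSkor

/-- Paths with values in the one-point compactification. -/
abbrev Path (S : Type*) := ℝ → OnePoint S

variable {S : Type*} [TopologicalSpace S]

/-- Distance between two points of `S^Δ`, with junk value `0` if one of them is `Δ`. -/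
noncomputable def dd (ρ : S → S → ℝ) : OnePoint S → OnePoint S → ℝ :=
  fun a b => Option.elim (show Option S from a) 0
    (fun a' => Option.elim (show Option S from b) 0 (fun b' => ρ a' b'))

/-- The set of times at which the path has already exploded. -/
def xiSet (x : Path S) : Set ℝ := {t : ℝ | x t = OnePoint.infty}

/-- The path explodes in finite time, i.e. `ξ(x) < ∞`. -/
def explodes (x : Path S) : Prop := (xiSet x).Nonempty

/-- The (real-valued) explosion time `ξ(x)`; junk value `0` if the path never explodes. -/
def xiR (x : Path S) : ℝ := sInf (xiSet x)

/-- The `[0,∞]`-valued explosion time `ξ(x)`. -/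
def xiE (x : Path S) : ℝ≥0∞ := ⨅ t ∈ xiSet x, ENNReal.ofReal t

/-- The range `{x_s, 0 ≤ s < ξ(x)}` of the path, as a subset of `S`. -/
def pathRange (x : Path S) : Set S := {a : S | ∃ s : ℝ, 0 ≤ s ∧ x s = (a : OnePoint S)}

/-- `x` is an exploding cadlag path: `x_t = Δ` exactly for `t ≥ ξ(x)` (and we normalize
`x` on negative times), `x` is right-continuous before explosion, and has left limits in `S`
at every point of `(0, ξ(x))`. -/
def IsDexp (x : Path S) : Prop :=
  (∀ t ≤ (0:ℝ), x t = x 0) ∧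
  (∀ ⦃s t : ℝ⦄, s ≤ t → x s = OnePoint.infty → x t = OnePoint.infty) ∧
  IsClosed (xiSet x) ∧
  (∀ t : ℝ, 0 ≤ t → x t ≠ OnePoint.infty → Tendsto x (𝓝[>] t) (𝓝 (x t))) ∧
  (∀ t : ℝ, 0 < t → x t ≠ OnePoint.infty →
    ∃ a : S, Tendsto x (𝓝[<] t) (𝓝 (a : OnePoint S)))

/-- `x` belongs to the local cadlag space `𝔻_loc(S)`. -/
def IsDloc (x : Path S) : Prop :=
  IsDexp x ∧
  ((explodes x ∧ 0 < xiR x ∧ IsCompact (closure (pathRange x))) →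
    ∃ a : S, Tendsto x (𝓝[<] xiR x) (𝓝 (a : OnePoint S)))

/-- `x` belongs to the global cadlag space `𝔻(S)`, i.e. `ξ(x) = ∞`. -/
def IsDglob (x : Path S) : Prop := IsDexp x ∧ ∀ t : ℝ, x t ≠ OnePoint.infty

/-- `x` is a cadlag path with values in the compact space `S^Δ`, i.e. `x ∈ 𝔻(S^Δ)`. -/
def IsCadlagDelta (x : Path S) : Prop :=
  (∀ t ≤ (0:ℝ), x t = x 0) ∧
  (∀ t : ℝ, 0 ≤ t → Tendsto x (𝓝[>] t) (𝓝 (x t))) ∧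
  (∀ t : ℝ, 0 < t → ∃ a : OnePoint S, Tendsto x (𝓝[<] t) (𝓝 a))

/-- The space `𝔻_exp(S)` of exploding cadlag paths. -/
def DexpT (S : Type*) [TopologicalSpace S] : Type _ := {x : Path S // IsDexp x}

/-- The space `𝔻_loc(S)`. -/
def DlocT (S : Type*) [TopologicalSpace S] : Type _ := {x : Path S // IsDloc x}

/-- The space `𝔻(S)`. -/
def DglobT (S : Type*) [TopologicalSpace S] : Type _ := {x : Path S // IsDglob x}

/-- The space `𝔻(S^Δ)`. -/
def DDeltaT (S : Type*) [TopologicalSpace S] : Type _ := {x : Path S // IsCadlagDelta x}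

/-! ### Time changes `Λ̃` and `Λ` -/

/-- `l` is an increasing bijection of `ℝ₊` (extended by the identity on negative reals):
the class `Λ̃`. -/
def IsTimeBij (l : ℝ → ℝ) : Prop :=
  StrictMono l ∧ Function.Surjective l ∧ ∀ t ≤ (0:ℝ), l t = t

/-- `‖log λ̇‖_t ≤ ε`, expressed through slopes. -/
def LogSlopeLe (l : ℝ → ℝ) (t ε : ℝ) : Prop :=
  ∀ s₁ s₂ : ℝ, 0 ≤ s₁ → s₁ < s₂ → s₂ ≤ t → |Real.log ((l s₂ - l s₁) / (s₂ - s₁))| ≤ ε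

/-- `‖λ - id‖_t ≤ ε`. -/
def IdDistLe (l : ℝ → ℝ) (t ε : ℝ) : Prop := ∀ s : ℝ, 0 ≤ s → s ≤ t → |l s - s| ≤ ε

/-- `l` belongs to the class `Λ` of increasing bijections of `ℝ₊` which are locally
Lipschitz together with their inverses (equivalently, `‖log λ̇‖_t < ∞` for all `t`). -/
def IsLipTimeBij (l : ℝ → ℝ) : Prop :=
  IsTimeBij l ∧ ∀ t : ℝ, 0 < t → ∃ C : ℝ, LogSlopeLe l t C

/-- `ξ(x) < ∞` together with the relative compactness in `S` of `{x_s, s < ξ(x)}`. -/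
def Case1 (x : Path S) : Prop := explodes x ∧ IsCompact (closure (pathRange x))

/-- Convergence criterion of Theorem 2.6, parametrized by the class of time changes and
by the norm used on them. -/
def ConvGen (ρ : S → S → ℝ) (Lam : (ℝ → ℝ) → Prop) (Nrm : (ℝ → ℝ) → ℝ → ℝ → Prop)
    (xk : ℕ → Path S) (x : Path S) : Prop :=
  ∃ l : ℕ → ℝ → ℝ, (∀ k, Lam (l k)) ∧
    (Case1 x →
      ((∀ᶠ k in atTop, ∀ s : ℝ, 0 ≤ s → s < l k (xiR x) → xk k s ≠ OnePoint.infty) ∧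
      (∀ ε > (0:ℝ), ∀ᶠ k in atTop, ∀ s : ℝ, 0 ≤ s → s < xiR x →
        dd ρ (x s) (xk k (l k s)) ≤ ε) ∧
      Tendsto (fun k => xk k (l k (xiR x))) atTop (𝓝 (OnePoint.infty : OnePoint S)) ∧
      (∀ ε > (0:ℝ), ∀ᶠ k in atTop, Nrm (l k) (xiR x) ε))) ∧
    (¬ Case1 x →
      ∀ t : ℝ, 0 ≤ t → x t ≠ OnePoint.infty →
        ((∀ᶠ k in atTop, xk k (l k t) ≠ OnePoint.infty) ∧
        (∀ ε > (0:ℝ), ∀ᶠ k in atTop, ∀ s : ℝ, 0 ≤ s → s ≤ t →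
          dd ρ (x s) (xk k (l k s)) ≤ ε) ∧
        (∀ ε > (0:ℝ), ∀ᶠ k in atTop, Nrm (l k) t ε)))

/-- Convergence criterion of Theorem 2.6 (with `Λ` and `‖log λ̇‖`). -/
def ConvLoc (ρ : S → S → ℝ) (xk : ℕ → Path S) (x : Path S) : Prop :=
  ConvGen ρ IsLipTimeBij LogSlopeLe xk x

/-- Convergence criterion of Theorem 2.7 (with `Λ̃` and `‖λ - id‖`). -/
def ConvLocTilde (ρ : S → S → ℝ) (xk : ℕ → Path S) (x : Path S) : Prop :=
  ConvGen ρ IsTimeBij IdDistLe xk x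

/-! ### σ-algebras -/

/-- The Borel σ-algebra of `S^Δ`. -/
def msOP (S : Type*) [TopologicalSpace S] : MeasurableSpace (OnePoint S) := borel _

/-- The σ-algebra `𝓕_t = σ(X_s, 0 ≤ s ≤ t)`. -/
def filt {α : Type*} (ev : α → Path S) (t : ℝ) : MeasurableSpace α :=
  ⨆ s ∈ Icc (0:ℝ) t, MeasurableSpace.comap (fun x => ev x s) (msOP S)

/-- The σ-algebra `𝓕_{t-} = σ(X_s, 0 ≤ s < t)`. -/
def filtLt {α : Type*} (ev : α → Path S) (t : ℝ) : MeasurableSpace α :=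
  ⨆ s ∈ Ico (0:ℝ) t, MeasurableSpace.comap (fun x => ev x s) (msOP S)

/-- The σ-algebra `𝓕 = σ(X_s, 0 ≤ s < ∞)`. -/
def filtAll {α : Type*} (ev : α → Path S) : MeasurableSpace α :=
  ⨆ s ∈ Ici (0:ℝ), MeasurableSpace.comap (fun x => ev x s) (msOP S)

/-- The σ-algebra `𝓕_{t+} = ⋂_{s>t} 𝓕_s`. -/
def filtPlus {α : Type*} (ev : α → Path S) (t : ℝ) : MeasurableSpace α :=
  ⨅ s ∈ Ioi t, filt ev s

/-- `τ` is an `(𝓕_t)`-stopping time. -/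
def IsStopping {α : Type*} (ev : α → Path S) (τ : α → ℝ≥0∞) : Prop :=
  ∀ t : ℝ, 0 ≤ t → MeasurableSet[filt ev t] {x | τ x ≤ ENNReal.ofReal t}

open Classical in
/-- Evaluation of a path at a `[0,∞]`-valued time (`Δ` at time `∞`). -/
def evalE (x : Path S) (t : ℝ≥0∞) : OnePoint S :=
  if t = ⊤ then OnePoint.infty else x t.toReal

open Classical in
/-- The left limit `x_{t-}`, junk value `Δ` if it does not exist. -/
def leftLimVal (x : Path S) (t : ℝ) : OnePoint S :=
  if h : ∃ a : OnePoint S, Tendsto x (𝓝[<] t) (𝓝 a) then h.choose else OnePoint.infty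

/-- The exit time `τ^U = inf {t ≥ 0 | X_{t-} ∉ U or X_t ∉ U}`. -/
def tauU (U : Set S) (x : Path S) : ℝ≥0∞ :=
  ⨅ t ∈ {t : ℝ | 0 ≤ t ∧
      ((0 < t ∧ ¬ ∃ a ∈ U, Tendsto x (𝓝[<] t) (𝓝 (a : OnePoint S))) ∨
        ¬ ∃ a ∈ U, x t = (a : OnePoint S))},
    ENNReal.ofReal t

/-! ### The modulus `ω'` -/

/-- The modulus of continuity `ω'_{t,K,x}(δ)` of (2.5), with values in `[0,∞]`. -/
def omegaMod (ρ : S → S → ℝ) (t : ℝ) (K : Set S) (x : Path S) (δ : ℝ) : ℝ≥0∞ :=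
  ⨅ (p : ℕ × (ℕ → ℝ)) (_ : p.2 0 = 0 ∧ (∀ i < p.1, p.2 i + δ < p.2 (i + 1)) ∧
      (∀ s : ℝ, 0 ≤ s → s < p.2 p.1 → x s ≠ OnePoint.infty) ∧
      ¬ (p.2 p.1 ≤ t ∧ ∃ a ∈ K, x (p.2 p.1) = (a : OnePoint S))),
    ⨆ (i : ℕ) (_ : i < p.1) (s₁ : ℝ) (_ : p.2 i ≤ s₁ ∧ s₁ < p.2 (i + 1))
      (s₂ : ℝ) (_ : p.2 i ≤ s₂ ∧ s₂ < p.2 (i + 1)),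
      ENNReal.ofReal (dd ρ (x s₁) (x s₂))

/-! ### Skorokhod pseudo-metrics -/

open Classical in
/-- The penalty term `d(x_{t₁}, K^c) ∧ (t - t₁)_+ 𝟙_{t₁ < ξ(x)}` appearing in the
definition of the pseudo-metrics (with the convention `d(a, ∅) = +∞`). -/
noncomputable def pen (ρ : S → S → ℝ) (t : ℝ) (K : Set S) (x : Path S) (t₁ : ℝ) : ℝ :=
  Option.elim (show Option S from x t₁) 0 (fun a =>
    if (Kᶜ : Set S).Nonempty then min (sInf ((fun b => ρ a b) '' (Kᶜ : Set S))) (max (t - t₁) 0)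
    else max (t - t₁) 0)

open Classical in
/-- The set of admissible bounds in the definition of `ρ̃_{t,K}` (`useLip = false`) and of
`ρ_{t,K}` (`useLip = true`). -/
def rhoSet (useLip : Bool) (ρ : S → S → ℝ) (t : ℝ) (K : Set S) (x y : Path S) : Set ℝ :=
  {r : ℝ | 0 ≤ r ∧ ∃ t₁ t₂ : ℝ, ∃ l : ℝ → ℝ, 0 ≤ t₁ ∧ 0 ≤ t₂ ∧ l t₁ = t₂ ∧
    (if useLip then IsLipTimeBij l else IsTimeBij l) ∧
    (∀ s : ℝ, 0 ≤ s → s < t₁ → x s ≠ OnePoint.infty) ∧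
    (∀ s : ℝ, 0 ≤ s → s < t₂ → y s ≠ OnePoint.infty) ∧
    (∀ s : ℝ, 0 ≤ s → s < t₁ → dd ρ (x s) (y (l s)) ≤ r) ∧
    IdDistLe l t₁ r ∧
    (useLip = true → LogSlopeLe l t₁ r) ∧
    pen ρ t K x t₁ ≤ r ∧ pen ρ t K y t₂ ≤ r}

/-- The pseudo-metric `ρ̃_{t,K}`. -/
noncomputable def rhoTilde (ρ : S → S → ℝ) (t : ℝ) (K : Set S) (x y : Path S) : ℝ :=
  sInf (rhoSet false ρ t K x y)

/-- The pseudo-metric `ρ_{t,K}`. -/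
noncomputable def rhoMet (ρ : S → S → ℝ) (t : ℝ) (K : Set S) (x y : Path S) : ℝ :=
  sInf (rhoSet true ρ t K x y)

/-! ### Time change -/

/-- `g ∈ C^{≠0}(S, ℝ₊)`: `{g = 0}` is closed and `g` is continuous on `{g ≠ 0}`. -/
def Czero (g : S → ℝ) : Prop :=
  (∀ a : S, 0 ≤ g a) ∧ IsClosed {a : S | g a = 0} ∧ ContinuousOn g {a : S | g a ≠ 0}

/-- `g ∈ C̃^{≠0}(S, ℝ₊)`: moreover `g` is bounded on every compact subset of `S`. -/
def CzeroLocBdd (g : S → ℝ) : Prop :=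
  Czero g ∧ ∀ K : Set S, IsCompact K → ∃ C : ℝ, ∀ a ∈ K, g a ≤ C

/-- `g` extended to `S^Δ` by the junk value `0` at `Δ`. -/
def gOP (g : S → ℝ) : OnePoint S → ℝ := fun a => Option.elim (show Option S from a) 0 g

open Classical in
/-- The additive functional `A^g_t(x) = ∫_0^t du / g(x_u)` for `t ∈ [0, τ^{{g≠0}}(x)]`,
and `+∞` otherwise. -/
noncomputable def Ag (g : S → ℝ) (x : Path S) (t : ℝ) : ℝ≥0∞ :=
  if 0 ≤ t ∧ ENNReal.ofReal t ≤ tauU {a : S | g a ≠ 0} x then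
    ∫⁻ u in Ioo (0:ℝ) t, (ENNReal.ofReal (gOP g (x u)))⁻¹
  else ⊤

/-- The time change `τ^g_t(x) = inf {s ≥ 0 | A^g_s(x) ≥ t}`, for `t ∈ [0,∞]`. -/
noncomputable def taug (g : S → ℝ) (x : Path S) (t : ℝ≥0∞) : ℝ≥0∞ :=
  ⨅ s ∈ {s : ℝ | 0 ≤ s ∧ t ≤ Ag g x s}, ENNReal.ofReal s

/-- The total mass `A^g_{τ^g_∞(x)}(x) = ∫_0^{τ^{{g≠0}}(x)} du / g(x_u)`. -/
noncomputable def Atotal (g : S → ℝ) (x : Path S) : ℝ≥0∞ :=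
  ∫⁻ u in {u : ℝ | 0 < u ∧ ENNReal.ofReal u ≤ tauU {a : S | g a ≠ 0} x},
    (ENNReal.ofReal (gOP g (x u)))⁻¹

/-- The filter of times converging to `t ∈ [0,∞]` from the left. -/
noncomputable def leftFilter (t : ℝ≥0∞) : Filter ℝ := if t = ⊤ then atTop else 𝓝[<] t.toReal

open Classical in
/-- The left limit `x_{t-}` at a `[0,∞]`-valued time, junk value `Δ` if it does not exist. -/
noncomputable def leftLimValE (x : Path S) (t : ℝ≥0∞) : OnePoint S :=
  if h : ∃ a : OnePoint S, Tendsto x (leftFilter t) (𝓝 a) then h.choose else OnePoint.infty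

open Classical in
/-- The time-changed path `g·x` of Definition 3.1.  -/
noncomputable def timeChange (g : S → ℝ) (x : Path S) : Path S := fun t =>
  if 0 ≤ t ∧ Atotal g x ≤ ENNReal.ofReal t ∧
      ∃ a : S, g a = 0 ∧ Tendsto x (leftFilter (tauU {b : S | g b ≠ 0} x)) (𝓝 (a : OnePoint S))
  then leftLimValE x (tauU {b : S | g b ≠ 0} x)
  else evalE x (taug g x (ENNReal.ofReal t))

/-- The constant path equal to `Δ`. -/
def deadPath (S : Type*) [TopologicalSpace S] : Path S := fun _ => OnePoint.infty

lemma isDexp_deadPath : IsDexp (deadPath S) := by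
  refine ⟨fun _ _ => rfl, fun _ _ _ _ => rfl, ?_, ?_, ?_⟩
  · have : xiSet (deadPath S) = univ := by ext t; simp [xiSet, deadPath]
    rw [this]; exact isClosed_univ
  · intro t _ h; exact absurd rfl h
  · intro t _ h; exact absurd rfl h

lemma isDloc_deadPath : IsDloc (deadPath S) := by
  refine ⟨isDexp_deadPath, ?_⟩
  rintro ⟨-, hxi, -⟩
  exfalso
  have huniv : xiSet (deadPath S) = univ := by ext t; simp [xiSet, deadPath]
  have : xiR (deadPath S) = 0 := by
    rw [xiR, huniv]
    exact Real.sInf_of_not_bddBelow (by simp [not_bddBelow_univ (α := ℝ)])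
  rw [this] at hxi; exact lt_irrefl 0 hxi

lemma isCadlagDelta_deadPath : IsCadlagDelta (deadPath S) :=
  ⟨fun _ _ => rfl, fun _ _ => tendsto_const_nhds, fun _ _ => ⟨OnePoint.infty, tendsto_const_nhds⟩⟩

open Classical in
/-- Packaging of a raw path as an element of `𝔻_loc(S)` (junk value if it is not one). -/
noncomputable def toDloc (y : Path S) : DlocT S :=
  if h : IsDloc y then ⟨y, h⟩ else ⟨deadPath S, isDloc_deadPath⟩

open Classical in
/-- Packaging of a raw path as an element of `𝔻(S^Δ)` (junk value if it is not one). -/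
noncomputable def toDDelta (y : Path S) : DDeltaT S :=
  if h : IsCadlagDelta y then ⟨y, h⟩ else ⟨deadPath S, isCadlagDelta_deadPath⟩

/-- Condition defining the continuity set `B` of Theorem 3.3, for a pair `(g, x)`. -/
def BCond (g : S → ℝ) (x : Path S) : Prop :=
  (tauU {a : S | g a ≠ 0} x < xiE x →
    ∀ t : ℝ, tauU {a : S | g a ≠ 0} x < ENNReal.ofReal t →
      ∫⁻ u in Ioo (0:ℝ) t, (ENNReal.ofReal (gOP g (x u)))⁻¹ = ⊤) ∧
  (Atotal g x < ⊤ →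
    ∀ a : S, tauU {a : S | g a ≠ 0} x ≠ ⊤ →
      Tendsto x (𝓝[<] (tauU {a : S | g a ≠ 0} x).toReal) (𝓝 (a : OnePoint S)) →
      g a = 0 → x ((tauU {a : S | g a ≠ 0} x).toReal) = (a : OnePoint S))

/-- `x_{ξ(x)-}` exists in `U` whenever `0 < ξ(x) < ∞`. -/
def limExistsIn (U : Set S) (y : Path S) : Prop :=
  (explodes y ∧ 0 < xiR y) → ∃ a ∈ U, Tendsto y (𝓝[<] xiR y) (𝓝 (a : OnePoint S))

/-! ### Global Skorokhod convergence -/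

/-- Convergence in the global Skorokhod topology of `𝔻(S)` (Corollary 2.7). -/
def ConvGlob (ρ : S → S → ℝ) (xk : ℕ → Path S) (x : Path S) : Prop :=
  ∃ l : ℕ → ℝ → ℝ, (∀ k, IsLipTimeBij (l k)) ∧ ∀ t : ℝ, 0 ≤ t →
    (∀ ε > (0:ℝ), ∀ᶠ k in atTop, ∀ s : ℝ, 0 ≤ s → s ≤ t → dd ρ (x s) (xk k (l k s)) ≤ ε) ∧
    (∀ ε > (0:ℝ), ∀ᶠ k in atTop, LogSlopeLe (l k) t ε)

/-- Convergence in the global Skorokhod topology of `𝔻(S^Δ)`, written with entourages of the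
(unique) uniformity of the compact space `S^Δ` (equivalently, with any compatible metric). -/
def ConvGlobDelta (xk : ℕ → Path S) (x : Path S) : Prop :=
  ∃ l : ℕ → ℝ → ℝ, (∀ k, IsTimeBij (l k)) ∧ ∀ t : ℝ, 0 ≤ t →
    (∀ V ∈ 𝓝ˢ (Set.diagonal (OnePoint S)), ∀ᶠ k in atTop,
      ∀ s : ℝ, 0 ≤ s → s ≤ t → ((x s, xk k (l k s)) : OnePoint S × OnePoint S) ∈ V) ∧
    (∀ ε > (0:ℝ), ∀ᶠ k in atTop, IdDistLe (l k) t ε)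

/-! ### Markov families -/

/-- The shifted path `(X_{t₀+t})_{t≥0}`, at a `[0,∞]`-valued time `t₀`. -/
noncomputable def shiftE (x : Path S) (t₀ : ℝ≥0∞) : Path S := fun t =>
  if t₀ = ⊤ then OnePoint.infty else x (t₀.toReal + max t 0)

/-- Conditions a), b) in the definition of a Markov family (together with the
normalisation `P_Δ(ξ = 0) = 1`). -/
def MarkovBase {α : Type*} (ev : α → Path S)
    (P : OnePoint S → @Measure α (filtAll ev)) : Prop :=
  (∀ a : OnePoint S, @IsProbabilityMeasure α (filtAll ev) (P a)) ∧
  (∀ B : Set α, MeasurableSet[filtAll ev] B →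
    @Measurable S ℝ≥0∞ (borel S) inferInstance (fun a : S => P (a : OnePoint S) B)) ∧
  (∀ a : S, P (a : OnePoint S) {x | ev x 0 = (a : OnePoint S)} = 1) ∧
  (P OnePoint.infty {x | ev x 0 = OnePoint.infty} = 1)

/-- Condition c) in the definition of a `(𝓖_t)`-Markov family. -/
def MarkovProp {α : Type*} (ev : α → Path S) (G : ℝ → MeasurableSpace α)
    (P : OnePoint S → @Measure α (filtAll ev)) : Prop :=
  ∀ (a : OnePoint S) (t₀ : ℝ), 0 ≤ t₀ →
    ∀ B : Set (Path S), MeasurableSet[filtAll (id : Path S → Path S)] B →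
      ∀ A : Set α, MeasurableSet[G t₀] A →
        P a (A ∩ {x | (fun t => ev x (t₀ + max t 0)) ∈ B}) =
          ∫⁻ x in A, P (ev x t₀) {y | ev y ∈ B} ∂(P a)

/-- Condition c) for a `(𝓖_t)`-strong Markov family: the Markov property at every
`(𝓖_t)`-stopping time. -/
def StrongMarkovProp {α : Type*} (ev : α → Path S) (G : ℝ → MeasurableSpace α)
    (P : OnePoint S → @Measure α (filtAll ev)) : Prop :=
  ∀ (a : OnePoint S) (τ : α → ℝ≥0∞),
    (∀ t : ℝ, 0 ≤ t → MeasurableSet[G t] {x | τ x ≤ ENNReal.ofReal t}) →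
    ∀ B : Set (Path S), MeasurableSet[filtAll (id : Path S → Path S)] B →
      ∀ A : Set α, MeasurableSet[filtAll ev] A →
        (∀ t : ℝ, 0 ≤ t → MeasurableSet[G t] (A ∩ {x | τ x ≤ ENNReal.ofReal t})) →
        P a (A ∩ {x | shiftE (ev x) (τ x) ∈ B}) =
          ∫⁻ x in A, P (evalE (ev x) (τ x)) {y | ev y ∈ B} ∂(P a)




/-! ### Generic helper lemmas -/

lemma neg_log_le_aux {z ε : ℝ} (hz0 : 0 ≤ z) (hε : 0 ≤ ε) (hε' : ε ≤ 1/50)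
    (hz : z ≤ 2/3 + ε) : -Real.log (1 - z) ≤ 3*z + 10*ε := by
  have h1 : (0:ℝ) < 1 - z := by linarith
  have h4 : 1 + (3*z+10*ε) ≤ Real.exp (3*z+10*ε) := by
    have := Real.add_one_le_exp (3*z+10*ε); linarith
  have key : 1 ≤ (1 - z) * (1 + (3*z+10*ε)) := by nlinarith
  have hprod : 1 ≤ (1 - z) * Real.exp (3*z+10*ε) :=
    key.trans (mul_le_mul_of_nonneg_left h4 h1.le)
  have h2 : Real.exp (-(3*z+10*ε)) ≤ 1 - z := by
    rw [Real.exp_neg, ← one_div, div_le_iff₀ (Real.exp_pos _)]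
    linarith
  have := (Real.le_log_iff_exp_le h1).2 h2
  linarith

lemma min_sub_min_le {s₁ s₂ c d : ℝ} (hs : s₁ ≤ s₂) (hcd : c ≤ d) :
    min s₂ c - min s₁ c ≤ min s₂ d - min s₁ d := by
  rcases le_total s₂ c with h1 | h1
  · rw [min_eq_left h1, min_eq_left (hs.trans h1), min_eq_left (h1.trans hcd),
      min_eq_left ((hs.trans h1).trans hcd)]
  · rw [min_eq_right h1]
    rcases le_total s₁ c with h2 | h2
    · rw [min_eq_left h2, min_eq_left (h2.trans hcd)]
      have h3 : c ≤ min s₂ d := le_min h1 hcd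
      linarith
    · rw [min_eq_right h2]
      have h3 : min s₁ d ≤ min s₂ d := min_le_min hs le_rfl
      linarith

lemma sub_min_mono {s₁ s₂ c : ℝ} (hs : s₁ ≤ s₂) : s₁ - min s₁ c ≤ s₂ - min s₂ c := by
  rcases le_total s₂ c with h2 | h2
  · rw [min_eq_left h2, min_eq_left (hs.trans h2)]; linarith
  · rw [min_eq_right h2]
    rcases le_total s₁ c with h3 | h3
    · rw [min_eq_left h3]; linarith
    · rw [min_eq_right h3]; linarith

lemma mono_of_step {f : ℕ → ℝ} {n : ℕ} (h : ∀ i < n, f i ≤ f (i+1)) :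
    ∀ i j, i ≤ j → j ≤ n → f i ≤ f j := by
  intro i j hij
  induction hij with
  | refl => intro _; exact le_rfl
  | @step k hk ih =>
      intro hjn
      exact (ih (Nat.le_of_succ_le hjn)).trans (h k (Nat.lt_of_succ_le hjn))

lemma exists_cell {f : ℕ → ℝ} {n : ℕ} (hmono : ∀ i j, i ≤ j → j ≤ n → f i ≤ f j)
    {s : ℝ} (h0 : f 0 ≤ s) (hn : s < f n) : ∃ j, j < n ∧ f j ≤ s ∧ s < f (j+1) := by
  classical
  set j := Nat.findGreatest (fun i => f i ≤ s) n with hj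
  have hj_le : j ≤ n := Nat.findGreatest_le n
  have hjP : f j ≤ s := Nat.findGreatest_spec (P := fun i => f i ≤ s) (Nat.zero_le n) h0
  have hjn : j ≠ n := by
    intro h
    rw [h] at hjP
    exact absurd hjP (not_le.2 hn)
  have hj1 : s < f (j+1) :=
    not_le.1 (Nat.findGreatest_is_greatest (P := fun i => f i ≤ s) (Nat.lt_succ_self j)
      (Nat.succ_le_of_lt (lt_of_le_of_ne hj_le hjn)))
  exact ⟨j, lt_of_le_of_ne hj_le hjn, hjP, hj1⟩



/-! ### Piecewise linear interpolation -/

noncomputable def pwl (n : ℕ) (v w : ℕ → ℝ) : ℝ → ℝ := fun s =>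
  min s 0 + (∑ j ∈ Finset.range n,
      (w (j+1) - w j) / (v (j+1) - v j) * (min s (v (j+1)) - min s (v j)))
    + (s - min s (v n))

variable {n : ℕ} {v w : ℕ → ℝ}

lemma pwl_neg (hv0 : v 0 = 0) (hlt : ∀ j < n, v j < v (j+1)) {s : ℝ} (hs : s ≤ 0) :
    pwl n v w s = s := by
  have hmono := mono_of_step (fun i hi => (hlt i hi).le)
  have hnn : ∀ j, j ≤ n → s ≤ v j := fun j hj =>
    hs.trans (hv0 ▸ hmono 0 j (Nat.zero_le j) hj)
  unfold pwl
  rw [min_eq_left hs, min_eq_left (hnn n le_rfl)]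
  rw [Finset.sum_eq_zero (fun j hj => by
    have hjn := Finset.mem_range.1 hj
    rw [min_eq_left (hnn (j+1) hjn), min_eq_left (hnn j hjn.le), sub_self, mul_zero])]
  ring

lemma pwl_piece (hv0 : v 0 = 0) (hw0 : w 0 = 0) (hlt : ∀ j < n, v j < v (j+1))
    {j : ℕ} (hj : j < n) {s : ℝ} (h1 : v j ≤ s) (h2 : s ≤ v (j+1)) :
    pwl n v w s = w j + (w (j+1) - w j) / (v (j+1) - v j) * (s - v j) := by
  have hmono := mono_of_step (n := n) (fun i hi => (hlt i hi).le)
  have hs0 : 0 ≤ s := le_trans (hv0 ▸ hmono 0 j (Nat.zero_le j) hj.le) h1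
  have hsn : s ≤ v n := h2.trans (hmono (j+1) n (Nat.succ_le_of_lt hj) le_rfl)
  unfold pwl
  rw [min_eq_right hs0, min_eq_left hsn]
  have hsum : ∑ i ∈ Finset.range n,
        (w (i+1) - w i) / (v (i+1) - v i) * (min s (v (i+1)) - min s (v i))
      = ∑ i ∈ Finset.range (j+1),
        (w (i+1) - w i) / (v (i+1) - v i) * (min s (v (i+1)) - min s (v i)) := by
    symm
    apply Finset.sum_subset
    · intro k hk
      simp only [Finset.mem_range] at *
      omega
    · intro k hk hk'
      simp only [Finset.mem_range, not_lt] at hk hk'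
      have hks : s ≤ v k := h2.trans (hmono (j+1) k hk' hk.le)
      rw [min_eq_left hks, min_eq_left (hks.trans (hlt k hk).le), sub_self, mul_zero]
  rw [hsum, Finset.sum_range_succ, min_eq_left h2, min_eq_right h1]
  have hsum2 : ∑ i ∈ Finset.range j,
        (w (i+1) - w i) / (v (i+1) - v i) * (min s (v (i+1)) - min s (v i))
      = ∑ i ∈ Finset.range j, (w (i+1) - w i) := by
    apply Finset.sum_congr rfl
    intro k hk
    have hkj : k < j := Finset.mem_range.1 hk
    have hkn : k < n := hkj.trans hj
    have h1' : v (k+1) ≤ s := (hmono (k+1) j hkj hj.le).trans h1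
    rw [min_eq_right h1', min_eq_right ((hlt k hkn).le.trans h1'),
      div_mul_cancel₀ _ (sub_ne_zero.2 (hlt k hkn).ne')]
  rw [hsum2, Finset.sum_range_sub, hw0]
  ring

lemma pwl_node (hv0 : v 0 = 0) (hw0 : w 0 = 0) (hlt : ∀ j < n, v j < v (j+1))
    {k : ℕ} (hk : k ≤ n) : pwl n v w (v k) = w k := by
  rcases Nat.eq_zero_or_pos k with rfl | hkpos
  · rcases Nat.eq_zero_or_pos n with rfl | hn
    · unfold pwl
      rw [hv0]
      simp [hw0.symm]
    · rw [pwl_piece hv0 hw0 hlt hn le_rfl (hlt 0 hn).le]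
      simp
  · obtain ⟨j, rfl⟩ : ∃ j, k = j + 1 := ⟨k - 1, by omega⟩
    have hjn : j < n := by omega
    rw [pwl_piece hv0 hw0 hlt hjn (hlt j hjn).le le_rfl,
      div_mul_cancel₀ _ (sub_ne_zero.2 (hlt j hjn).ne')]
    ring

def Dfun (s₁ s₂ : ℝ) (v : ℕ → ℝ) (i : ℕ) : ℝ := min s₂ (v i) - min s₁ (v i)

lemma pwl_sub_bounds (hv0 : v 0 = 0) (hlt : ∀ j < n, v j < v (j+1)) {a b : ℝ}
    (ha : a ≤ 1) (hb : 1 ≤ b)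
    (hs : ∀ j < n, a * (v (j+1) - v j) ≤ w (j+1) - w j ∧ w (j+1) - w j ≤ b * (v (j+1) - v j))
    {s₁ s₂ : ℝ} (h12 : s₁ ≤ s₂) :
    a * (s₂ - s₁) ≤ pwl n v w s₂ - pwl n v w s₁ ∧
      pwl n v w s₂ - pwl n v w s₁ ≤ b * (s₂ - s₁) := by
  have hDval : ∀ i, Dfun s₁ s₂ v i = min s₂ (v i) - min s₁ (v i) := fun i => rfl
  set D : ℕ → ℝ := Dfun s₁ s₂ v with hDdef
  have hDmono : ∀ i, i < n → D i ≤ D (i+1) := fun i hi => by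
    rw [hDval, hDval]
    exact min_sub_min_le h12 (hlt i hi).le
  have hdiff : pwl n v w s₂ - pwl n v w s₁ =
      D 0 +
      (∑ i ∈ Finset.range n, (w (i+1) - w i) / (v (i+1) - v i) * (D (i+1) - D i)) +
      ((s₂ - s₁) - D n) := by
    have hsplit : ∑ i ∈ Finset.range n, (w (i+1) - w i) / (v (i+1) - v i) * (D (i+1) - D i)
        = (∑ i ∈ Finset.range n,
            (w (i+1) - w i) / (v (i+1) - v i) * (min s₂ (v (i+1)) - min s₂ (v i)))
          - ∑ i ∈ Finset.range n,
            (w (i+1) - w i) / (v (i+1) - v i) * (min s₁ (v (i+1)) - min s₁ (v i)) := by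
      rw [← Finset.sum_sub_distrib]
      exact Finset.sum_congr rfl (fun i _ => by rw [hDval, hDval]; ring)
    unfold pwl
    rw [hsplit, hDval, hDval, hv0]
    ring
  have hteles : ∑ i ∈ Finset.range n, (D (i+1) - D i) = D n - D 0 := Finset.sum_range_sub D n
  have hE0 : 0 ≤ D 0 := by
    rw [hDval, hv0]
    exact sub_nonneg.2 (min_le_min h12 le_rfl)
  have hE1 : 0 ≤ (s₂ - s₁) - D n := by
    have := sub_min_mono (c := v n) h12
    rw [hDval]
    linarith
  have hDn0 : 0 ≤ D n - D 0 := by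
    rw [← hteles]
    exact Finset.sum_nonneg (fun i hi => sub_nonneg.2 (hDmono i (Finset.mem_range.1 hi)))
  have hub : ∑ i ∈ Finset.range n, (w (i+1) - w i) / (v (i+1) - v i) * (D (i+1) - D i)
      ≤ b * (D n - D 0) := by
    rw [← hteles, Finset.mul_sum]
    apply Finset.sum_le_sum
    intro i hi
    have hi' := Finset.mem_range.1 hi
    have hΔ : 0 < v (i+1) - v i := sub_pos.2 (hlt i hi')
    have hρb : (w (i+1) - w i) / (v (i+1) - v i) ≤ b := by
      rw [div_le_iff₀ hΔ]
      linarith [(hs i hi').2]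
    exact mul_le_mul_of_nonneg_right hρb (sub_nonneg.2 (hDmono i hi'))
  have hlb : a * (D n - D 0) ≤
      ∑ i ∈ Finset.range n, (w (i+1) - w i) / (v (i+1) - v i) * (D (i+1) - D i) := by
    rw [← hteles, Finset.mul_sum]
    apply Finset.sum_le_sum
    intro i hi
    have hi' := Finset.mem_range.1 hi
    have hΔ : 0 < v (i+1) - v i := sub_pos.2 (hlt i hi')
    have hρa : a ≤ (w (i+1) - w i) / (v (i+1) - v i) := by
      rw [le_div_iff₀ hΔ]
      linarith [(hs i hi').1]
    exact mul_le_mul_of_nonneg_right hρa (sub_nonneg.2 (hDmono i hi'))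
  constructor
  · have h1 : a * D 0 ≤ D 0 := by nlinarith
    have h2 : a * ((s₂ - s₁) - D n) ≤ (s₂ - s₁) - D n := by nlinarith
    have h3 : a * (s₂ - s₁) = a * D 0 + a * (D n - D 0) + a * ((s₂ - s₁) - D n) := by ring
    linarith
  · have h1 : D 0 ≤ b * D 0 := by nlinarith
    have h2 : (s₂ - s₁) - D n ≤ b * ((s₂ - s₁) - D n) := by nlinarith
    have h3 : b * (s₂ - s₁) = b * D 0 + b * (D n - D 0) + b * ((s₂ - s₁) - D n) := by ring
    linarith

lemma pwl_continuous : Continuous (pwl n v w) := by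
  unfold pwl
  apply Continuous.add
  apply Continuous.add
  · exact continuous_id.min continuous_const
  · exact continuous_finset_sum _ (fun i _ =>
      continuous_const.mul ((continuous_id.min continuous_const).sub
        (continuous_id.min continuous_const)))
  · exact continuous_id.sub (continuous_id.min continuous_const)

lemma surj_of_lb {f : ℝ → ℝ} (hcont : Continuous f) (hf0 : f 0 = 0) {a : ℝ} (ha : 0 < a)
    (hlb : ∀ s₁ s₂ : ℝ, s₁ ≤ s₂ → a * (s₂ - s₁) ≤ f s₂ - f s₁) : Function.Surjective f := by
  intro c
  set lo := min (c / a) 0 with hlo_def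
  set hi := max (c / a) 0 with hhi_def
  have hlohi : lo ≤ hi := (min_le_right _ 0).trans (le_max_right _ 0)
  have hca : a * (c / a) = c := by field_simp
  have hflo : f lo ≤ c := by
    have h := hlb lo 0 (min_le_right _ 0)
    rw [hf0] at h
    have h2 : a * lo ≤ c := by
      have : lo ≤ c / a := min_le_left _ _
      calc a * lo ≤ a * (c / a) := by exact mul_le_mul_of_nonneg_left this ha.le
        _ = c := hca
    nlinarith
  have hfhi : c ≤ f hi := by
    have h := hlb 0 hi (le_max_right _ 0)
    rw [hf0] at h
    have h2 : c ≤ a * hi := by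
      have : c / a ≤ hi := le_max_left _ _
      calc c = a * (c / a) := hca.symm
        _ ≤ a * hi := mul_le_mul_of_nonneg_left this ha.le
    nlinarith
  obtain ⟨s, _, hs⟩ := intermediate_value_Icc hlohi hcont.continuousOn ⟨hflo, hfhi⟩
  exact ⟨s, hs⟩


/-! ### OnePoint, dd and pen helper lemmas -/

lemma onePoint_cases {X : Type*} (p : OnePoint X) :
    p = OnePoint.infty ∨ ∃ a : X, p = (a : OnePoint X) := by
  cases p with
  | infty => exact Or.inl rfl
  | coe a => exact Or.inr ⟨a, rfl⟩

section MetricHelpers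

variable {X : Type*} [MetricSpace X]

lemma dd_coe (a b : X) :
    dd (dist : X → X → ℝ) (a : OnePoint X) (b : OnePoint X) = dist a b := rfl

open Classical in
lemma pen_coe {t s : ℝ} {K : Set X} {x : Path X} {a : X} (h : x s = (a : OnePoint X)) :
    pen dist t K x s = if (Kᶜ : Set X).Nonempty
      then min (sInf ((fun b => dist a b) '' (Kᶜ : Set X))) (max (t - s) 0)
      else max (t - s) 0 := by
  unfold pen
  rw [h]
  rfl

lemma pen_infty {t s : ℝ} {K : Set X} {x : Path X} (h : x s = OnePoint.infty) :
    pen (dist : X → X → ℝ) t K x s = 0 := by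
  unfold pen
  rw [h]
  rfl

lemma bddBelow_dist_image (a : X) (A : Set X) : BddBelow ((fun b => dist a b) '' A) :=
  ⟨0, by rintro _ ⟨c, _, rfl⟩; exact dist_nonneg⟩

lemma pen_nonneg (t : ℝ) (K : Set X) (x : Path X) (s : ℝ) : 0 ≤ pen (dist) t K x s := by
  rcases onePoint_cases (x s) with h | ⟨a, h⟩
  · rw [pen_infty h]
  · rw [pen_coe h]
    split_ifs with hKc
    · refine le_min (Real.sInf_nonneg ?_) (le_max_right _ _)
      rintro _ ⟨c, _, rfl⟩
      exact dist_nonneg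
    · exact le_max_right _ _

lemma pen_le_end {t s : ℝ} {K : Set X} {x : Path X}
    (hend : ¬ (s ≤ t ∧ ∃ a ∈ K, x s = (a : OnePoint X))) : pen (dist) t K x s ≤ 0 := by
  rcases onePoint_cases (x s) with h | ⟨a, h⟩
  · rw [pen_infty h]
  · rw [pen_coe h]
    push_neg at hend
    by_cases hst : s ≤ t
    · have haK : a ∉ K := fun hK => hend hst a hK h
      have hKc : (Kᶜ : Set X).Nonempty := ⟨a, haK⟩
      rw [if_pos hKc]
      have h0 : sInf ((fun b => dist a b) '' (Kᶜ : Set X)) ≤ dist a a :=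
        csInf_le (bddBelow_dist_image a _) ⟨a, haK, rfl⟩
      rw [dist_self] at h0
      exact (min_le_left _ _).trans h0
    · have hmax : max (t - s) 0 = 0 := max_eq_right (by linarith [lt_of_not_ge hst])
      split_ifs with hKc
      · exact (min_le_right _ _).trans hmax.le
      · exact hmax.le

lemma sInf_dist_le_add {K : Set X} (hKc : (Kᶜ : Set X).Nonempty) (a b : X) :
    sInf ((fun c => dist b c) '' (Kᶜ : Set X))
      ≤ sInf ((fun c => dist a c) '' (Kᶜ : Set X)) + dist a b := by
  rw [← sub_le_iff_le_add]
  apply le_csInf (hKc.image _)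
  rintro _ ⟨c, hc, rfl⟩
  have h1 : sInf ((fun c => dist b c) '' (Kᶜ : Set X)) ≤ dist b c :=
    csInf_le (bddBelow_dist_image b _) ⟨c, hc, rfl⟩
  have h2 : dist b c ≤ dist b a + dist a c := dist_triangle b a c
  have h3 : dist b a = dist a b := dist_comm b a
  linarith

lemma pen_le_pen_add {t : ℝ} {K : Set X} {x z : Path X} {s₁ s₂ : ℝ} {a b : X}
    (hxa : x s₁ = (a : OnePoint X)) (hzb : z s₂ = (b : OnePoint X)) {D D' : ℝ}
    (hab : dist a b ≤ D) (hD' : s₁ - s₂ ≤ D') (hD0 : 0 ≤ D) (hD'0 : 0 ≤ D') :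
    pen dist t K z s₂ ≤ pen dist t K x s₁ + max D D' := by
  have hMnn : (0:ℝ) ≤ max D D' := hD0.trans (le_max_left _ _)
  rw [pen_coe hxa, pen_coe hzb]
  have hmax2 : max (t - s₂) 0 ≤ max (t - s₁) 0 + max D D' := by
    rw [max_le_iff]
    constructor
    · have h1 : t - s₂ ≤ (t - s₁) + D' := by linarith
      exact h1.trans (add_le_add (le_max_left _ _) (le_max_right _ _))
    · exact add_nonneg (le_max_right _ _) hMnn
  split_ifs with hKc
  · have h1 : sInf ((fun c => dist b c) '' (Kᶜ : Set X))
        ≤ sInf ((fun c => dist a c) '' (Kᶜ : Set X)) + max D D' :=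
      (sInf_dist_le_add hKc a b).trans
        (add_le_add le_rfl (hab.trans (le_max_left _ _)))
    calc min (sInf ((fun c => dist b c) '' (Kᶜ : Set X))) (max (t - s₂) 0)
        ≤ min (sInf ((fun c => dist a c) '' (Kᶜ : Set X)) + max D D')
            (max (t - s₁) 0 + max D D') := min_le_min h1 hmax2
      _ = min (sInf ((fun c => dist a c) '' (Kᶜ : Set X))) (max (t - s₁) 0) + max D D' :=
          min_add_add_right _ _ _
  · exact hmax2

end MetricHelpers

set_option maxHeartbeats 2000000 in
/-- Lemma 4.2. Let `x, y ∈ 𝔻_loc(S)`, `t ≥ 0` and `K ⊆ S` compact.  If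
`ρ̃_{t,K}(x,y) ≤ 1/9`, then
`ρ_{t,K}(x,y) ≤ 6 · (√ρ̃_{t,K}(x,y) ∨ ω'_{t,K,x}(√ρ̃_{t,K}(x,y)))`. -/
theorem rhoMet_le_of_rhoTilde_le
    {S : Type*} [MetricSpace S] [SecondCountableTopology S] [LocallyCompactSpace S]
    (t : ℝ) (ht : 0 ≤ t) (K : Set S) (hK : IsCompact K)
    (x y : Path S) (hx : IsDloc x) (hy : IsDloc y)
    (hle : rhoTilde dist t K x y ≤ 1 / 9) :
    ENNReal.ofReal (rhoMet dist t K x y) ≤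
      6 * max (ENNReal.ofReal (Real.sqrt (rhoTilde dist t K x y)))
        (omegaMod dist t K x (Real.sqrt (rhoTilde dist t K x y))) := by
  classical
  set rte := rhoTilde dist t K x y with hrt_def
  set δ := Real.sqrt rte with hδ_def
  by_cases hSne : (rhoSet false dist t K x y).Nonempty
  swap
  · have hsub : rhoSet true dist t K x y ⊆ rhoSet false dist t K x y := by
      rintro rr ⟨h0, t₁, t₂, l, h1, h2, h3, h4, h5, h6, h7, h8, h9, h10, h11⟩
      rw [if_pos rfl] at h4
      refine ⟨h0, t₁, t₂, l, h1, h2, h3, ?_, h5, h6, h7, h8, ?_, h10, h11⟩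
      · rw [if_neg Bool.false_ne_true]
        exact h4.1
      · exact fun h => absurd h Bool.false_ne_true
    have hempty : rhoSet true dist t K x y = ∅ := by
      rw [Set.eq_empty_iff_forall_notMem]
      intro rr hrr
      exact hSne ⟨rr, hsub hrr⟩
    have : rhoMet dist t K x y = 0 := by
      rw [rhoMet, hempty, Real.sInf_empty]
    rw [this, ENNReal.ofReal_zero]
    positivity
  have hrt0 : 0 ≤ rte := le_csInf hSne (fun b hb => hb.1)
  have hδ0 : 0 ≤ δ := Real.sqrt_nonneg _
  have hδδ : δ * δ = rte := Real.mul_self_sqrt hrt0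
  have hδ3 : δ ≤ 1/3 := by nlinarith [hle]
  by_cases hΩtop : omegaMod dist t K x δ = ⊤
  · have hrhs : 6 * max (ENNReal.ofReal δ) (omegaMod dist t K x δ) = ⊤ := by
      rw [hΩtop, max_eq_right le_top, ENNReal.mul_top (by norm_num)]
    rw [hrhs]
    exact le_top
  set wb := (omegaMod dist t K x δ).toReal with hwbar_def
  have hwb0 : 0 ≤ wb := ENNReal.toReal_nonneg
  clear_value wb
  set M := max δ wb with hM_def
  have hM0 : 0 ≤ M := le_trans hδ0 (le_max_left _ _)
  have hδM : δ ≤ M := le_max_left _ _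
  have hwbM : wb ≤ M := le_max_right _ _
  suffices hmain : rhoMet dist t K x y ≤ 6 * M by
    have hΩ : omegaMod dist t K x δ = ENNReal.ofReal wb := by
      rw [hwbar_def]
      exact (ENNReal.ofReal_toReal hΩtop).symm
    have hmax : max (ENNReal.ofReal δ) (ENNReal.ofReal wb) = ENNReal.ofReal M := by
      rcases le_total δ wb with h | h
      · rw [hM_def, max_eq_right h, max_eq_right (ENNReal.ofReal_le_ofReal h)]
      · rw [hM_def, max_eq_left h, max_eq_left (ENNReal.ofReal_le_ofReal h)]
    calc ENNReal.ofReal (rhoMet dist t K x y) ≤ ENNReal.ofReal (6 * M) :=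
          ENNReal.ofReal_le_ofReal hmain
      _ = ENNReal.ofReal 6 * ENNReal.ofReal M := ENNReal.ofReal_mul (by norm_num)
      _ = 6 * max (ENNReal.ofReal δ) (omegaMod dist t K x δ) := by
          rw [hΩ, hmax]
          norm_num
  clear_value M
  apply le_of_forall_pos_le_add
  intro η hη
  obtain ⟨ε, hε0, hε100, hεη⟩ : ∃ ε : ℝ, 0 < ε ∧ ε ≤ 1/100 ∧ 20 * ε ≤ η := by
    refine ⟨min (η/20) (1/100), by positivity, min_le_right _ _, ?_⟩
    have := min_le_left (η/20) (1/100)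
    linarith
  suffices h20 : rhoMet dist t K x y ≤ 6 * M + 20 * ε by linarith
  -- extract a good partition from the modulus
  have hΩlt : omegaMod dist t K x δ < omegaMod dist t K x δ + ENNReal.ofReal ε :=
    ENNReal.lt_add_right hΩtop (ENNReal.ofReal_pos.2 hε0).ne'
  obtain ⟨⟨N, u⟩, ⟨hu0, hgap, hnex, hend⟩, hosc⟩ :
      ∃ p : ℕ × (ℕ → ℝ),
        (p.2 0 = 0 ∧ (∀ i < p.1, p.2 i + δ < p.2 (i+1)) ∧
          (∀ s : ℝ, 0 ≤ s → s < p.2 p.1 → x s ≠ OnePoint.infty) ∧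
          ¬ (p.2 p.1 ≤ t ∧ ∃ a ∈ K, x (p.2 p.1) = (a : OnePoint S))) ∧
        (∀ i < p.1, ∀ s₁ s₂ : ℝ, p.2 i ≤ s₁ → s₁ < p.2 (i+1) → p.2 i ≤ s₂ → s₂ < p.2 (i+1) →
          dd dist (x s₁) (x s₂) ≤ wb + ε) := by
    have h1 := hΩlt
    rw [omegaMod] at h1
    obtain ⟨p, hp⟩ := iInf_lt_iff.1 h1
    obtain ⟨hcond, hval⟩ := iInf_lt_iff.1 hp
    refine ⟨p, hcond, ?_⟩
    intro i hi s₁ s₂ h1' h2' h3' h4'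
    have hle1 : ENNReal.ofReal (dd dist (x s₁) (x s₂)) ≤ ENNReal.ofReal (wb + ε) := by
      rw [ENNReal.ofReal_add hwb0 hε0.le, hwbar_def, ENNReal.ofReal_toReal hΩtop]
      refine le_trans ?_ hval.le
      exact le_iSup_of_le i (le_iSup_of_le hi (le_iSup_of_le s₁ (le_iSup_of_le ⟨h1', h2'⟩
        (le_iSup_of_le s₂ (le_iSup_of_le ⟨h3', h4'⟩ le_rfl)))))
    exact (ENNReal.ofReal_le_ofReal_iff (by positivity)).1 hle1
  dsimp only at hu0 hgap hnex hend hosc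
  set w' := wb + ε with hw'_def
  have hw'0 : 0 ≤ w' := by rw [hw'_def]; linarith
  clear_value w'
  have humono : ∀ i j, i ≤ j → j ≤ N → u i ≤ u j :=
    mono_of_step (fun i hi => by have := hgap i hi; linarith)
  have huN0 : 0 ≤ u N := by
    have h := humono 0 N (Nat.zero_le N) le_rfl
    rw [hu0] at h
    exact h
  obtain ⟨L, hL0, hLgap⟩ : ∃ L : ℝ, 0 < L ∧ ∀ i < N, L ≤ u (i+1) - u i := by
    rcases Nat.eq_zero_or_pos N with rfl | hN
    · exact ⟨1, one_pos, fun i hi => absurd hi (Nat.not_lt_zero i)⟩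
    · have hne : (Finset.range N).Nonempty := ⟨0, Finset.mem_range.2 hN⟩
      refine ⟨(Finset.range N).inf' hne (fun i => u (i+1) - u i), ?_, ?_⟩
      · rw [Finset.lt_inf'_iff]
        intro i hi
        have := hgap i (Finset.mem_range.1 hi)
        linarith
      · intro i hi
        exact Finset.inf'_le _ (Finset.mem_range.2 hi)
  set θ := max δ (min ε L / 2) with hθ_def
  have hθpos : 0 < θ := lt_of_lt_of_le (by positivity : (0:ℝ) < min ε L / 2) (le_max_right _ _)
  have hθδ : δ ≤ θ := le_max_left _ _
  have hθε : θ ≤ max δ ε := by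
    apply max_le (le_max_left _ _)
    have := min_le_left ε L
    have h2 : min ε L / 2 ≤ ε := by linarith
    exact h2.trans (le_max_right _ _)
  have hθM : θ ≤ M + ε := hθε.trans (max_le (by linarith) (by linarith))
  have hθ13 : θ ≤ 1/3 := hθε.trans (max_le hδ3 (by linarith))
  have hθgap : ∀ i < N, θ ≤ u (i+1) - u i := by
    intro i hi
    apply max_le (le_of_lt (by have := hgap i hi; linarith))
    have h1 := hLgap i hi
    have h2 := min_le_right ε L
    linarith
  clear_value θ
  -- choose a near-optimal time change for rhoTilde
  obtain ⟨r, hrmem, hrlt⟩ := Real.lt_sInf_add_pos hSne (by positivity : 0 < ε * θ / 2)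
  have hrub : r < rte + ε * θ / 2 := hrlt
  clear_value rte δ
  obtain ⟨hr0, t₁, t₂, φ, ht₁0, ht₂0, hltt, hbijif, hxne, hyne, hd, hid, -, hpx, hpy⟩ := hrmem
  rw [if_neg Bool.false_ne_true] at hbijif
  obtain ⟨hφmono, hφsurj, hφneg⟩ := hbijif
  have hφ0 : φ 0 = 0 := hφneg 0 le_rfl
  set z := 2 * r / θ with hz_def
  have hz0 : 0 ≤ z := by positivity
  have hzθ : z * θ = 2 * r := by
    rw [hz_def]
    field_simp
  have hz2δ : z ≤ 2 * δ + ε := by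
    rw [hz_def, div_le_iff₀ hθpos]
    have hδθ : δ * δ ≤ δ * θ := mul_le_mul_of_nonneg_left hθδ hδ0
    nlinarith
  have hz23 : z ≤ 2/3 + ε := by linarith
  have hz1 : z < 1 := by linarith
  clear_value z
  -- cut point
  set c := min t₁ (u N) with hc_def
  have hc0 : 0 ≤ c := le_min ht₁0 huN0
  have hct₁ : c ≤ t₁ := min_le_left _ _
  have hcuN : c ≤ u N := min_le_right _ _
  set m := Nat.findGreatest (fun j => u j ≤ c) N with hm_def
  have hmN : m ≤ N := Nat.findGreatest_le N
  have hum : u m ≤ c :=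
    Nat.findGreatest_spec (P := fun j => u j ≤ c) (Nat.zero_le N) (by show u 0 ≤ c; rw [hu0]; exact hc0)
  have hgt : ∀ k, m < k → k ≤ N → c < u k := fun k h1 h2 =>
    not_le.1 (Nat.findGreatest_is_greatest (P := fun j => u j ≤ c) h1 h2)
  have hmaxnn : (0:ℝ) ≤ max w' θ := le_trans hw'0 (le_max_left _ _)
  clear_value c m
  -- construct the node sequence
  obtain ⟨q, n, v, hv0, hvgap, hvn, hvt₁, hcell, hquN, hq0, hpenX⟩ :
      ∃ (q : ℝ) (n : ℕ) (v : ℕ → ℝ),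
        v 0 = 0 ∧ (∀ j < n, θ ≤ v (j+1) - v j) ∧ v n = q ∧ (∀ j ≤ n, v j ≤ t₁) ∧
        (∀ j < n, ∃ i, i < N ∧ u i ≤ v j ∧ v (j+1) ≤ u (i+1)) ∧ q ≤ u N ∧ 0 ≤ q ∧
        pen dist t K x q ≤ r + max w' θ := by
    have hum0 : 0 ≤ u m := by
      have h := humono 0 m (Nat.zero_le m) hmN
      rw [hu0] at h
      exact h
    by_cases hcs : c - u m ≤ θ
    · -- Case II : cut at the grid point u m
      refine ⟨u m, m, u, hu0, fun j hj => hθgap j (lt_of_lt_of_le hj hmN), rfl,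
        fun j hj => (humono j m hj hmN).trans (hum.trans hct₁),
        fun j hj => ⟨j, lt_of_lt_of_le hj hmN, le_rfl, le_rfl⟩,
        humono m N hmN le_rfl, hum0, ?_⟩
      rcases Nat.lt_or_ge m N with hmltN | hmge
      · have hcuN' : c < u N := hgt N hmltN le_rfl
        have ht₁N : t₁ < u N := by
          by_contra h
          push_neg at h
          rw [hc_def, min_eq_right h] at hcuN'
          exact lt_irrefl _ hcuN'
        have hct : c = t₁ := by rw [hc_def]; exact min_eq_left ht₁N.le
        rcases eq_or_lt_of_le (hum.trans hct₁) with hq | hq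
        · rw [hq]
          exact hpx.trans (by linarith)
        · have hxt₁ : x t₁ ≠ OnePoint.infty := hnex t₁ ht₁0 ht₁N
          have hxum : x (u m) ≠ OnePoint.infty := hnex (u m) hum0 (lt_trans hq ht₁N)
          rcases onePoint_cases (x t₁) with h | ⟨a, ha⟩
          · exact absurd h hxt₁
          rcases onePoint_cases (x (u m)) with h | ⟨b, hb⟩
          · exact absurd h hxum
          have ht₁m1 : t₁ < u (m+1) := by
            rw [← hct]
            exact hgt (m+1) (Nat.lt_succ_self m) (Nat.succ_le_of_lt hmltN)
          have hdist : dist a b ≤ w' := by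
            have h := hosc m hmltN t₁ (u m) hq.le ht₁m1 le_rfl
              (by have := hθgap m hmltN; linarith)
            rwa [ha, hb, dd_coe] at h
          have hpen := pen_le_pen_add (t := t) (K := K) ha hb hdist
            (by rw [← hct]; linarith : t₁ - u m ≤ θ) hw'0 hθpos.le
          linarith
      · have hmN' : m = N := le_antisymm hmN hmge
        have hpe : pen dist t K x (u m) ≤ 0 := by
          rw [hmN']
          exact pen_le_end hend
        linarith
    · -- Case I : cut at c, adding an extra node
      push_neg at hcs
      have hmltN : m < N := by
        rcases Nat.lt_or_ge m N with h | h
        · exact h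
        · exfalso
          have hmN' : m = N := le_antisymm hmN h
          rw [hmN'] at hum
          have hceq : c = u N := le_antisymm hcuN hum
          rw [hmN', hceq] at hcs
          linarith
      have hcu1 : c < u (m+1) := hgt (m+1) (Nat.lt_succ_self m) (Nat.succ_le_of_lt hmltN)
      have hcuN' : c < u N := hgt N hmltN le_rfl
      have ht₁N : t₁ < u N := by
        by_contra h
        push_neg at h
        rw [hc_def, min_eq_right h] at hcuN'
        exact lt_irrefl _ hcuN'
      have hct : c = t₁ := by rw [hc_def]; exact min_eq_left ht₁N.le
      refine ⟨c, m+1, fun j => if j ≤ m then u j else c, ?_, ?_, ?_, ?_, ?_, hcuN, hc0, ?_⟩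
      · show (if 0 ≤ m then u 0 else c) = 0
        rw [if_pos (Nat.zero_le m)]
        exact hu0
      · intro j hj
        show θ ≤ (if j + 1 ≤ m then u (j+1) else c) - (if j ≤ m then u j else c)
        rcases Nat.lt_succ_iff_lt_or_eq.1 hj with hjm | hjm
        · rw [if_pos (Nat.succ_le_of_lt hjm), if_pos hjm.le]
          exact hθgap j (hjm.trans hmltN)
        · subst hjm
          rw [if_pos le_rfl, if_neg (by omega)]
          linarith
      · show (if m + 1 ≤ m then u (m+1) else c) = c
        rw [if_neg (by omega)]
      · intro j hj
        show (if j ≤ m then u j else c) ≤ t₁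
        by_cases hjm : j ≤ m
        · rw [if_pos hjm]
          exact (humono j m hjm hmN).trans (hum.trans hct₁)
        · rw [if_neg hjm]
          exact hct₁
      · intro j hj
        refine ⟨min j m, ?_, ?_, ?_⟩
        · exact lt_of_le_of_lt (min_le_right j m) hmltN
        · show u (min j m) ≤ (if j ≤ m then u j else c)
          by_cases hjm : j ≤ m
          · rw [if_pos hjm, min_eq_left hjm]
          · rw [if_neg hjm]
            rw [min_eq_right (by omega : m ≤ j)]
            exact hum.trans le_rfl
        · show (if j + 1 ≤ m then u (j+1) else c) ≤ u (min j m + 1)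
          rcases Nat.lt_succ_iff_lt_or_eq.1 hj with hjm | hjm
          · rw [if_pos (Nat.succ_le_of_lt hjm), min_eq_left hjm.le]
          · subst hjm
            rw [if_neg (by omega), min_eq_left le_rfl]
            exact hcu1.le
      · show pen dist t K x c ≤ r + max w' θ
        rw [hct]
        exact hpx.trans (by linarith)
  -- the piecewise linear time change
  set w2 : ℕ → ℝ := fun j => φ (v j) with hw2_def
  set lam := pwl n v w2 with hlam_def
  have hvlt : ∀ j < n, v j < v (j+1) := fun j hj => by have := hvgap j hj; linarith
  have hvmono : ∀ i j, i ≤ j → j ≤ n → v i ≤ v j := mono_of_step (fun i hi => (hvlt i hi).le)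
  have hvnn : ∀ j, j ≤ n → 0 ≤ v j := fun j hj => by
    have h := hvmono 0 j (Nat.zero_le j) hj
    rw [hv0] at h
    exact h
  have hw20 : w2 0 = 0 := by
    simp only [hw2_def, hv0, hφ0]
  have hqt₁ : q ≤ t₁ := hvn ▸ hvt₁ n le_rfl
  have hwclose : ∀ j, j ≤ n → |φ (v j) - v j| ≤ r := fun j hj =>
    hid (v j) (hvnn j hj) (hvt₁ j hj)
  have hslopes : ∀ j < n,
      (1 - z) * (v (j+1) - v j) ≤ w2 (j+1) - w2 j ∧
        w2 (j+1) - w2 j ≤ (1 + z) * (v (j+1) - v j) := by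
    intro j hj
    have h1 := abs_le.1 (hwclose j hj.le)
    have h2 := abs_le.1 (hwclose (j+1) (Nat.succ_le_of_lt hj))
    have hθv : θ ≤ v (j+1) - v j := hvgap j hj
    have hzv : z * θ ≤ z * (v (j+1) - v j) := mul_le_mul_of_nonneg_left hθv hz0
    constructor
    · simp only [hw2_def]
      linarith [h1.1, h1.2, h2.1, h2.2, hzv, hzθ]
    · simp only [hw2_def]
      linarith [h1.1, h1.2, h2.1, h2.2, hzv, hzθ]
  have hsandwich : ∀ s₁ s₂ : ℝ, s₁ ≤ s₂ →
      (1 - z) * (s₂ - s₁) ≤ lam s₂ - lam s₁ ∧ lam s₂ - lam s₁ ≤ (1 + z) * (s₂ - s₁) :=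
    fun s₁ s₂ h => pwl_sub_bounds hv0 hvlt (by linarith) (by linarith) hslopes h
  have hlam_nodes : ∀ k, k ≤ n → lam (v k) = φ (v k) := fun k hk =>
    pwl_node hv0 hw20 hvlt hk
  have hlamq : lam q = φ q := by
    rw [← hvn]
    exact hlam_nodes n le_rfl
  have hlam0 : lam 0 = 0 := by
    have h := hlam_nodes 0 (Nat.zero_le n)
    rw [hv0] at h
    rw [h, hφ0]
  have hlam_surj : Function.Surjective lam :=
    surj_of_lb pwl_continuous hlam0 (by linarith : (0:ℝ) < 1 - z)
      (fun s₁ s₂ h => (hsandwich s₁ s₂ h).1)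
  have hlam_neg : ∀ s : ℝ, s ≤ 0 → lam s = s := fun s hs => pwl_neg hv0 hvlt hs
  have hlam_piece : ∀ j < n, ∀ s : ℝ, v j ≤ s → s ≤ v (j+1) →
      lam s = φ (v j) + (φ (v (j+1)) - φ (v j)) / (v (j+1) - v j) * (s - v j) := by
    intro j hj s h1 h2
    have hpiece := pwl_piece (w := w2) hv0 hw20 hvlt hj h1 h2
    simp only [hw2_def] at hpiece
    exact hpiece
  clear_value lam w2
  have hlam_mono : StrictMono lam := by
    intro s₁ s₂ h
    have hsw := (hsandwich s₁ s₂ h.le).1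
    have hprod : 0 < (1 - z) * (s₂ - s₁) := mul_pos (by linarith) (by linarith)
    linarith
  have hCbound : ∀ T : ℝ, LogSlopeLe lam T (3*z + 10*ε) := by
    intro T s₁ s₂ hs₁ hs₁₂ hs₂T
    have hsw := hsandwich s₁ s₂ hs₁₂.le
    have hpos : 0 < s₂ - s₁ := by linarith
    have hchord_lb : 1 - z ≤ (lam s₂ - lam s₁) / (s₂ - s₁) := by
      rw [le_div_iff₀ hpos]
      linarith [hsw.1]
    have hchord_ub : (lam s₂ - lam s₁) / (s₂ - s₁) ≤ 1 + z := by
      rw [div_le_iff₀ hpos]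
      linarith [hsw.2]
    have hchord_pos : 0 < (lam s₂ - lam s₁) / (s₂ - s₁) := by linarith
    rw [abs_le]
    constructor
    · have hlog1 : Real.log (1 - z) ≤ Real.log ((lam s₂ - lam s₁)/(s₂ - s₁)) :=
        Real.log_le_log (by linarith) hchord_lb
      have hlog2 : -Real.log (1 - z) ≤ 3*z + 10*ε :=
        neg_log_le_aux hz0 hε0.le (by linarith) hz23
      linarith
    · have hlog3 : Real.log ((lam s₂ - lam s₁)/(s₂-s₁)) ≤ (lam s₂ - lam s₁)/(s₂-s₁) - 1 :=
        Real.log_le_sub_one_of_pos hchord_pos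
      linarith
  have hLip : IsLipTimeBij lam :=
    ⟨⟨hlam_mono, hlam_surj, hlam_neg⟩, fun T _ => ⟨3*z + 10*ε, hCbound T⟩⟩
  -- numeric bounds
  have hrup : r ≤ δ/3 + ε := by
    have e1 : δ * δ ≤ δ * (1/3) := mul_le_mul_of_nonneg_left hδ3 hδ0
    have e2 : ε * θ ≤ ε * (1/3) := mul_le_mul_of_nonneg_left hθ13 hε0.le
    linarith
  have hw'M : w' ≤ M + ε := by rw [hw'_def]; linarith
  set r' := 6*M + 20*ε with hr'_def
  have hr'0 : 0 ≤ r' := by rw [hr'_def]; linarith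
  have hrr' : r ≤ r' := by rw [hr'_def]; linarith
  have hmaxM : max w' θ ≤ M + ε := max_le hw'M hθM
  -- membership of r' in the Lipschitz Skorokhod set
  have hmem : r' ∈ rhoSet true dist t K x y := by
    refine ⟨hr'0, q, φ q, lam, hq0, ?_, hlamq, ?_, ?_, ?_, ?_, ?_, ?_, ?_, ?_⟩
    · rw [← hφ0]
      exact hφmono.monotone hq0
    · rw [if_pos rfl]
      exact hLip
    · intro s hs0 hsq
      exact hnex s hs0 (lt_of_lt_of_le hsq hquN)
    · intro s hs0 hs2
      refine hyne s hs0 (lt_of_lt_of_le hs2 ?_)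
      rw [← hltt]
      exact hφmono.monotone hqt₁
    · -- distance bound
      intro s hs0 hsq
      obtain ⟨j, hjn, hjs, hjs1⟩ := exists_cell (s := s) hvmono (by rw [hv0]; exact hs0)
        (by rw [hvn]; exact hsq)
      have hlam_lb : φ (v j) ≤ lam s := by
        have h := (hsandwich (v j) s hjs).1
        have hnode := hlam_nodes j hjn.le
        have hprod : 0 ≤ (1 - z) * (s - v j) :=
          mul_nonneg (by linarith) (by linarith)
        linarith
      have hlam_ub : lam s < φ (v (j+1)) := by
        have h := (hsandwich s (v (j+1)) hjs1.le).1
        have hnode := hlam_nodes (j+1) (Nat.succ_le_of_lt hjn)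
        have hprod : 0 < (1 - z) * (v (j+1) - s) :=
          mul_pos (by linarith) (by linarith)
        linarith
      obtain ⟨σ, hσ⟩ := hφsurj (lam s)
      have hσlb : v j ≤ σ := by
        have h2 : φ (v j) ≤ φ σ := by rw [hσ]; exact hlam_lb
        exact hφmono.le_iff_le.1 h2
      have hσub : σ < v (j+1) := by
        have h2 : φ σ < φ (v (j+1)) := by rw [hσ]; exact hlam_ub
        exact hφmono.lt_iff_lt.1 h2
      obtain ⟨i, hiN, hiu, hiu1⟩ := hcell j hjn
      have hσt₁ : σ < t₁ :=
        lt_of_lt_of_le hσub ((hvmono (j+1) n (Nat.succ_le_of_lt hjn) le_rfl).trans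
          (hvn ▸ hqt₁))
      have hσ0 : 0 ≤ σ := (hvnn j hjn.le).trans hσlb
      have hxs : x s ≠ OnePoint.infty := hnex s hs0 (lt_of_lt_of_le hsq hquN)
      have hxσ : x σ ≠ OnePoint.infty := hnex σ hσ0
        (lt_of_lt_of_le hσub (hiu1.trans (humono (i+1) N (Nat.succ_le_of_lt hiN) le_rfl)))
      have hyσ : y (φ σ) ≠ OnePoint.infty := by
        refine hyne _ ?_ ?_
        · rw [← hφ0]
          exact hφmono.monotone hσ0
        · rw [← hltt]
          exact hφmono hσt₁
      rcases onePoint_cases (x s) with h | ⟨as, has⟩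
      · exact absurd h hxs
      rcases onePoint_cases (x σ) with h | ⟨aσ, haσ⟩
      · exact absurd h hxσ
      rcases onePoint_cases (y (φ σ)) with h | ⟨bσ, hbσ⟩
      · exact absurd h hyσ
      have hosc' : dist as aσ ≤ w' := by
        have h := hosc i hiN s σ (hiu.trans hjs) (lt_of_lt_of_le hjs1 hiu1)
          (hiu.trans hσlb) (lt_of_lt_of_le hσub hiu1)
        rwa [has, haσ, dd_coe] at h
      have hdσ : dist aσ bσ ≤ r := by
        have h := hd σ hσ0 hσt₁
        rwa [haσ, hbσ, dd_coe] at h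
      have hgoal : dd dist (x s) (y (lam s)) = dist as bσ := by
        rw [← hσ, has, hbσ, dd_coe]
      rw [hgoal]
      calc dist as bσ ≤ dist as aσ + dist aσ bσ := dist_triangle _ _ _
        _ ≤ w' + r := add_le_add hosc' hdσ
        _ ≤ r' := by rw [hr'_def, hw'_def]; linarith
    · -- IdDistLe
      intro s hs0 hsq
      rcases hsq.lt_or_eq with hlt | heq
      · obtain ⟨j, hjn, hjs, hjs1⟩ := exists_cell (s := s) hvmono (by rw [hv0]; exact hs0)
          (by rw [hvn]; exact hlt)
        have hpiece := hlam_piece j hjn s hjs hjs1.le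
        have hΔpos : 0 < v (j+1) - v j := sub_pos.2 (hvlt j hjn)
        have hkey : lam s - s = (1 - (s - v j)/(v (j+1) - v j)) * (φ (v j) - v j)
            + ((s - v j)/(v (j+1) - v j)) * (φ (v (j+1)) - v (j+1)) := by
          rw [hpiece]
          field_simp
          ring
        set α := (s - v j)/(v (j+1) - v j) with hα_def
        have hα0 : 0 ≤ α := div_nonneg (by linarith) hΔpos.le
        have hα1 : α ≤ 1 := by
          rw [hα_def, div_le_one hΔpos]
          linarith
        clear_value α
        have h1 := abs_le.1 (hwclose j hjn.le)
        have h2 := abs_le.1 (hwclose (j+1) (Nat.succ_le_of_lt hjn))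
        have e1 := mul_le_mul_of_nonneg_left h1.1 (by linarith : (0:ℝ) ≤ 1 - α)
        have e2 := mul_le_mul_of_nonneg_left h1.2 (by linarith : (0:ℝ) ≤ 1 - α)
        have e3 := mul_le_mul_of_nonneg_left h2.1 hα0
        have e4 := mul_le_mul_of_nonneg_left h2.2 hα0
        rw [abs_le]
        constructor
        · linarith [e1, e3, hrr']
        · linarith [e2, e4, hrr']
      · subst heq
        rw [← hvn, hlam_nodes n le_rfl]
        exact (hwclose n le_rfl).trans hrr'
    · -- LogSlopeLe
      intro _
      intro s₁ s₂ h1 h2 h3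
      refine (hCbound q s₁ s₂ h1 h2 h3).trans ?_
      rw [hr'_def]
      linarith
    · -- pen x
      refine hpenX.trans ?_
      rw [hr'_def]
      linarith
    · -- pen y
      have hbase : r + max w' θ + r ≤ r' := by rw [hr'_def]; linarith
      rcases eq_or_lt_of_le hqt₁ with heq | hlt
      · rw [heq, hltt]
        exact hpy.trans (by linarith)
      · have hxq : x q ≠ OnePoint.infty := hxne q hq0 hlt
        rcases onePoint_cases (x q) with h | ⟨aq, haq⟩
        · exact absurd h hxq
        rcases onePoint_cases (y (φ q)) with hyq | ⟨bq, hbq⟩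
        · rw [pen_infty hyq]
          exact hr'0
        · have hdq : dist aq bq ≤ r := by
            have h := hd q hq0 hlt
            rwa [haq, hbq, dd_coe] at h
          have hidq : q - φ q ≤ r := by
            have h := abs_le.1 (hid q hq0 hqt₁)
            linarith [h.1]
          have h := pen_le_pen_add (t := t) (K := K) haq hbq hdq hidq hr0 hr0
          rw [max_self] at h
          linarith
  have hfin : rhoMet dist t K x y ≤ r' := csInf_le ⟨0, fun b hb => hb.1⟩ hmem
  rw [hr'_def] at hfin
  linarith

end LocSkor
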